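/- Immediate always-taker covariate means: suppose (X, T_1(1), T_1(0)) is independent of Z, Monotonicity holds, and P(T_1 = 1, Z = 0) > 0. Then E[X | T_1(1) = T_1(0) = 1] = E[X | T_1 = 1, Z = 0]. -/

import Mathlib

open MeasureTheory ProbabilityTheory Finset

/-- Conditional mean `E[X | A]`: the expectation of `X` under `P` conditioned on the event `A`. -/
noncomputable def cmean {Ω : Type*} [MeasurableSpace Ω] (P : MeasureTheory.Measure Ω)
    (A : Set Ω) (X : Ω → ℝ) : ℝ :=
  ∫ ω, X ω ∂(P[|A])

theorem immediate_always_taker_covariate_means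
    {Ω : Type*} [MeasurableSpace Ω] (P : MeasureTheory.Measure Ω) [IsProbabilityMeasure P]
    (Z : Ω → ℕ) (hZmeas : Measurable Z) (hZbin : ∀ ω, Z ω ≤ 1)
    (hZpos : 0 < P {ω | Z ω = 1}) (hZlt : P {ω | Z ω = 1} < 1)
    (wbar : ℕ) (hwbar : 1 ≤ wbar)
    (T : ℕ → ℕ → Ω → ℕ) (hTmeas : ∀ w z, Measurable (T w z))
    (hTrange : ∀ w ∈ Set.Icc 1 wbar, ∀ z ≤ 1, ∀ ω, T w z ω ≤ w)
    (X : Ω → ℝ) (hXmeas : Measurable X) (hXint : MeasureTheory.Integrable X P)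
    (hIndepX1 : IndepFun (fun ω => (X ω, T 1 1 ω, T 1 0 ω)) Z P)
    (hMono : ∀ w ∈ Set.Icc 1 wbar, ∀ᵐ ω ∂P, T w 0 ω ≤ T w 1 ω)
    (hAT : 0 < P {ω | T 1 (Z ω) ω = 1 ∧ Z ω = 0}) :
    cmean P {ω | T 1 1 ω = 1 ∧ T 1 0 ω = 1} X
      = cmean P {ω | T 1 (Z ω) ω = 1 ∧ Z ω = 0} X := by
  set A : Set Ω := {ω | T 1 0 ω = 1} with hA
  set B : Set Ω := {ω | Z ω = 0} with hB
  have hAmeas : MeasurableSet A := (hTmeas 1 0) (measurableSet_singleton 1)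
  have hBmeas : MeasurableSet B := hZmeas (measurableSet_singleton 0)
  -- the observed always-taker set equals A ∩ B
  have hS2 : {ω | T 1 (Z ω) ω = 1 ∧ Z ω = 0} = A ∩ B := by
    ext ω
    simp only [Set.mem_setOf_eq, Set.mem_inter_iff, hA, hB, Set.mem_setOf_eq]
    constructor
    · rintro ⟨h1, h2⟩; rw [h2] at h1; exact ⟨h1, h2⟩
    · rintro ⟨h1, h2⟩; exact ⟨by rw [h2]; exact h1, h2⟩
  -- the principal-stratum set equals A a.e.
  have hS1 : {ω | T 1 1 ω = 1 ∧ T 1 0 ω = 1} =ᵐ[P] A := by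
    rw [Filter.eventuallyEq_set]
    filter_upwards [hMono 1 ⟨le_refl 1, hwbar⟩] with ω hm
    simp only [Set.mem_setOf_eq, hA]
    constructor
    · rintro ⟨_, h⟩; exact h
    · intro h
      refine ⟨le_antisymm (hTrange 1 ⟨le_refl 1, hwbar⟩ 1 le_rfl ω) ?_, h⟩
      omega
  -- cond measures agree along the a.e. equality
  have hcond1 : P[|{ω | T 1 1 ω = 1 ∧ T 1 0 ω = 1}] = P[|A] := by
    unfold ProbabilityTheory.cond
    rw [measure_congr hS1, Measure.restrict_congr_set hS1]
  -- positivity facts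
  have hPABpos : 0 < P (A ∩ B) := by rwa [hS2] at hAT
  have hPA : 0 < P A := hPABpos.trans_le (measure_mono Set.inter_subset_left)
  have hPB : 0 < P B := hPABpos.trans_le (measure_mono Set.inter_subset_right)
  have hPAne : P A ≠ 0 := hPA.ne'
  have hPBne : P B ≠ 0 := hPB.ne'
  have hPAfin : P A ≠ ⊤ := (measure_lt_top P A).ne
  have hPBfin : P B ≠ ⊤ := (measure_lt_top P B).ne
  -- independence of A and B as derived functions
  have hIndep := hIndepX1.measure_inter_preimage_eq_mul
    {p : ℝ × ℕ × ℕ | p.2.2 = 1} {0}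
    (by
      have : MeasurableSet {p : ℝ × ℕ × ℕ | p.2.2 = 1} :=
        (measurable_snd.comp measurable_snd) (measurableSet_singleton 1)
      exact this)
    (measurableSet_singleton 0)
  have hPmul : P (A ∩ B) = P A * P B := by
    convert hIndep using 2 <;> rfl
  -- integral factorization: ∫ X on A∩B = (∫ X on A) * P(B)
  have hg : Measurable (fun p : ℝ × ℕ × ℕ => if p.2.2 = 1 then p.1 else 0) := by
    refine Measurable.ite ?_ measurable_fst measurable_const
    exact (measurable_snd.comp measurable_snd) (measurableSet_singleton 1)
  have hh : Measurable (fun z : ℕ => if z = 0 then (1:ℝ) else 0) := by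
    exact measurable_from_top.ite (measurableSet_singleton 0) measurable_const
  have hIF : IndepFun (fun ω => if T 1 0 ω = 1 then X ω else 0)
      (fun ω => if Z ω = 0 then (1:ℝ) else 0) P :=
    hIndepX1.comp hg hh
  have hYint : Integrable (fun ω => if T 1 0 ω = 1 then X ω else 0) P := by
    have : (fun ω => if T 1 0 ω = 1 then X ω else 0) = A.indicator X := by
      ext ω; by_cases h : T 1 0 ω = 1 <;> simp [Set.indicator, hA, h]
    rw [this]; exact hXint.indicator hAmeas
  have hWint : Integrable (fun ω => if Z ω = 0 then (1:ℝ) else 0) P := by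
    have : (fun ω => if Z ω = 0 then (1:ℝ) else 0) = B.indicator 1 := by
      ext ω; by_cases h : Z ω = 0 <;> simp [Set.indicator, hB, h]
    rw [this]; exact (integrable_const 1).indicator hBmeas
  have hprod := hIF.integral_fun_mul_eq_mul_integral hYint.aestronglyMeasurable hWint.aestronglyMeasurable
  have key : ∫ ω in A ∩ B, X ω ∂P = (∫ ω in A, X ω ∂P) * (P B).toReal := by
    have h1 : ∫ ω, (if T 1 0 ω = 1 then X ω else 0) * (if Z ω = 0 then (1:ℝ) else 0) ∂P
        = ∫ ω in A ∩ B, X ω ∂P := by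
      rw [← integral_indicator (hAmeas.inter hBmeas)]
      congr 1; ext ω
      by_cases h : T 1 0 ω = 1 <;> by_cases h' : Z ω = 0 <;>
        simp [Set.indicator, hA, hB, h, h']
    have h2 : ∫ ω, (if T 1 0 ω = 1 then X ω else 0) ∂P = ∫ ω in A, X ω ∂P := by
      rw [← integral_indicator hAmeas]
      congr 1; ext ω
      by_cases h : T 1 0 ω = 1 <;> simp [Set.indicator, hA, h]
    have h3 : ∫ ω, (if Z ω = 0 then (1:ℝ) else 0) ∂P = (P B).toReal := by
      have : (fun ω => if Z ω = 0 then (1:ℝ) else 0) = B.indicator 1 := by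
        ext ω; by_cases h : Z ω = 0 <;> simp [Set.indicator, hB, h]
      rw [this, integral_indicator hBmeas]
      simp [Measure.real]
    rw [← h1]
    exact hprod.trans (by rw [h2, h3])
  -- now compute both cmeans
  rw [hS2]
  unfold cmean
  rw [hcond1]
  unfold ProbabilityTheory.cond
  rw [integral_smul_measure, integral_smul_measure, key, hPmul]
  rw [ENNReal.toReal_inv, ENNReal.toReal_inv, ENNReal.toReal_mul]
  have hA0 : (P A).toReal ≠ 0 := ENNReal.toReal_ne_zero.mpr ⟨hPAne, hPAfin⟩
  have hB0 : (P B).toReal ≠ 0 := ENNReal.toReal_ne_zero.mpr ⟨hPBne, hPBfin⟩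
  simp only [smul_eq_mul]
  field_simp
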